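/- Let $\varepsilon \in (0,1)$. For each integer $n \ge 2$ let $k(n) = \lfloor n - n^{1-\varepsilon} \rfloor + 1$ and for $k(n) \le j \le n$ set $w_j = \frac{1/j - 1/(j+1)}{1/k(n) - 1/(n+1)}$. Define the entropy $H_n = -\sum_{j=k(n)}^{n} w_j \ln w_j$. Then $\liminf_{n \to \infty} \frac{H_n}{\ln n} \ge 1 - \varepsilon$. -/

import Mathlib

open Filter Real Finset

lemma tele (k n : ℕ) (h : k ≤ n) :
    ∑ j ∈ Finset.Icc k n, ((1:ℝ)/(j:ℝ) - 1/((j:ℝ)+1)) = 1/(k:ℝ) - 1/((n:ℝ)+1) := by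
  induction n, h using Nat.le_induction with
  | base => simp
  | succ n hn ih =>
      rw [Finset.sum_Icc_succ_top (by omega), ih]
      push_cast; ring

lemma core (ε : ℝ) (hε0 : 0 < ε) (hε1 : ε < 1) (n : ℕ) (hn2 : 2 ≤ n)
    (hx1 : 1 ≤ (n:ℝ) - (n:ℝ)^(1-ε)) :
    (1 - ε) + Real.log (((n:ℝ) - (n:ℝ)^(1-ε)) / ((n:ℝ)+1)) / Real.log n ≤
    (-(∑ j ∈ Finset.Icc (⌊(n : ℝ) - (n : ℝ) ^ (1 - ε)⌋₊ + 1) n,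
          (((1 : ℝ) / (j : ℝ) - 1 / ((j : ℝ) + 1)) /
              (1 / ((⌊(n : ℝ) - (n : ℝ) ^ (1 - ε)⌋₊ : ℝ) + 1) - 1 / ((n : ℝ) + 1))) *
            Real.log
              (((1 : ℝ) / (j : ℝ) - 1 / ((j : ℝ) + 1)) /
                (1 / ((⌊(n : ℝ) - (n : ℝ) ^ (1 - ε)⌋₊ : ℝ) + 1) - 1 / ((n : ℝ) + 1))))) /
        Real.log n := by
  have hx2 : (2:ℝ) ≤ (n:ℝ) := by exact_mod_cast hn2
  set x := (n:ℝ) with hxdef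
  have hx0 : 0 < x := by linarith
  have hrp : 0 < x^(1-ε) := Real.rpow_pos_of_pos hx0 _
  set m := ⌊x - x^(1-ε)⌋₊ with hmdef
  have hrr : (0:ℝ) ≤ x - x^(1-ε) := by linarith
  have hmle : (m:ℝ) ≤ x - x^(1-ε) := Nat.floor_le hrr
  have hmlt : x - x^(1-ε) < (m:ℝ) + 1 := Nat.lt_floor_add_one _
  have hm1 : 1 ≤ m := Nat.le_floor (by exact_mod_cast hx1)
  have hmn : m < n := by
    apply (Nat.floor_lt hrr).2
    linarith
  have hkn : m + 1 ≤ n := hmn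
  set K : ℝ := (m:ℝ) + 1 with hKdef
  have hK2 : (2:ℝ) ≤ K := by
    have : (1:ℝ) ≤ (m:ℝ) := by exact_mod_cast hm1
    rw [hKdef]; linarith
  have hKx : K ≤ x := by
    have : ((m:ℕ):ℝ) + 1 ≤ (n:ℝ) := by exact_mod_cast hkn
    rw [hKdef]; exact this
  set S : ℝ := 1 / K - 1 / (x + 1) with hSdef
  have hS : 0 < S := by
    have h1 : 1/(x+1) < 1/K := one_div_lt_one_div_of_lt (by linarith) (by linarith)
    rw [hSdef]; linarith
  have hsum : ∑ j ∈ Finset.Icc (m+1) n, ((1:ℝ)/(j:ℝ) - 1/((j:ℝ)+1)) = S := by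
    rw [tele (m+1) n hkn, hSdef, hKdef]
    push_cast
    ring
  have hwsum : ∑ j ∈ Finset.Icc (m+1) n,
      (((1:ℝ)/(j:ℝ) - 1/((j:ℝ)+1)) / S) = 1 := by
    rw [← Finset.sum_div, hsum, div_self hS.ne']
  have hK0 : (0:ℝ) < K := by linarith
  have hdK : (1:ℝ)/K - 1/(K+1) = 1/(K*(K+1)) := by
    field_simp; ring
  have hdKpos : 0 < (1:ℝ)/K - 1/(K+1) := by rw [hdK]; positivity
  have hwkpos : 0 < ((1:ℝ)/K - 1/(K+1)) / S := div_pos hdKpos hS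
  -- bound each term
  have key : ∀ j ∈ Finset.Icc (m+1) n,
      (((1:ℝ)/(j:ℝ) - 1/((j:ℝ)+1)) / S) * Real.log (((1:ℝ)/(j:ℝ) - 1/((j:ℝ)+1)) / S)
      ≤ (((1:ℝ)/(j:ℝ) - 1/((j:ℝ)+1)) / S) * Real.log (((1:ℝ)/K - 1/(K+1)) / S) := by
    intro j hj
    simp only [Finset.mem_Icc] at hj
    have hjK : K ≤ (j:ℝ) := by
      have : ((m:ℕ):ℝ) + 1 ≤ (j:ℝ) := by exact_mod_cast hj.1
      rw [hKdef]; exact this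
    have hj0 : (0:ℝ) < (j:ℝ) := by linarith
    have hdj : (1:ℝ)/(j:ℝ) - 1/((j:ℝ)+1) = 1/((j:ℝ)*((j:ℝ)+1)) := by
      field_simp; ring
    have hdjpos : 0 < (1:ℝ)/(j:ℝ) - 1/((j:ℝ)+1) := by rw [hdj]; positivity
    have hle : (1:ℝ)/(j:ℝ) - 1/((j:ℝ)+1) ≤ 1/K - 1/(K+1) := by
      rw [hdj, hdK]
      apply one_div_le_one_div_of_le (by positivity)
      apply mul_le_mul hjK (by linarith) (by linarith) (by linarith)
    have hwpos : 0 < ((1:ℝ)/(j:ℝ) - 1/((j:ℝ)+1)) / S := div_pos hdjpos hS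
    refine mul_le_mul_of_nonneg_left ?_ hwpos.le
    exact Real.log_le_log hwpos ((div_le_div_iff_of_pos_right hS).2 hle)
  have hsumle : (∑ j ∈ Finset.Icc (m+1) n,
      (((1:ℝ)/(j:ℝ) - 1/((j:ℝ)+1)) / S) * Real.log (((1:ℝ)/(j:ℝ) - 1/((j:ℝ)+1)) / S))
      ≤ Real.log (((1:ℝ)/K - 1/(K+1)) / S) := by
    calc (∑ j ∈ Finset.Icc (m+1) n,
        (((1:ℝ)/(j:ℝ) - 1/((j:ℝ)+1)) / S) * Real.log (((1:ℝ)/(j:ℝ) - 1/((j:ℝ)+1)) / S))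
        ≤ ∑ j ∈ Finset.Icc (m+1) n,
          (((1:ℝ)/(j:ℝ) - 1/((j:ℝ)+1)) / S) * Real.log (((1:ℝ)/K - 1/(K+1)) / S) :=
          Finset.sum_le_sum key
      _ = (∑ j ∈ Finset.Icc (m+1) n, (((1:ℝ)/(j:ℝ) - 1/((j:ℝ)+1)) / S)) *
            Real.log (((1:ℝ)/K - 1/(K+1)) / S) := by rw [← Finset.sum_mul]
      _ = Real.log (((1:ℝ)/K - 1/(K+1)) / S) := by rw [hwsum, one_mul]
  have hinv : (((1:ℝ)/K - 1/(K+1)) / S)⁻¹ = (K+1)*(x+1-K)/(x+1) := by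
    have hK0' : K ≠ 0 := hK0.ne'
    have hK1' : K + 1 ≠ 0 := by positivity
    have hx1' : x + 1 ≠ 0 := by positivity
    rw [hdK, hSdef, inv_div]
    field_simp
  have hpos : 0 < x - x^(1-ε) := by linarith
  have hmono : ((x - x^(1-ε))/(x+1)) * x^(1-ε) ≤ (K+1)*(x+1-K)/(x+1) := by
    rw [div_mul_eq_mul_div]
    apply (div_le_div_iff_of_pos_right (by linarith : (0:ℝ) < x+1)).2
    apply mul_le_mul (by linarith) (by linarith) hrp.le (by linarith)
  have hlogle : (1-ε) * Real.log x + Real.log ((x - x^(1-ε))/(x+1)) ≤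
      Real.log ((((1:ℝ)/K - 1/(K+1)) / S)⁻¹) := by
    rw [hinv]
    have h2 := Real.log_le_log (by positivity) hmono
    rw [Real.log_mul (by positivity) hrp.ne', Real.log_rpow hx0] at h2
    linarith
  have hH : (1-ε) * Real.log x + Real.log ((x - x^(1-ε))/(x+1)) ≤
      -(∑ j ∈ Finset.Icc (m+1) n,
      (((1:ℝ)/(j:ℝ) - 1/((j:ℝ)+1)) / S) * Real.log (((1:ℝ)/(j:ℝ) - 1/((j:ℝ)+1)) / S)) := by
    calc (1-ε) * Real.log x + Real.log ((x - x^(1-ε))/(x+1))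
        ≤ Real.log ((((1:ℝ)/K - 1/(K+1)) / S)⁻¹) := hlogle
      _ = - Real.log (((1:ℝ)/K - 1/(K+1)) / S) := Real.log_inv _
      _ ≤ _ := neg_le_neg hsumle
  have hlx : 0 < Real.log x := Real.log_pos (by linarith)
  rw [show (1-ε) + Real.log ((x - x^(1-ε))/(x+1)) / Real.log x =
      ((1-ε) * Real.log x + Real.log ((x - x^(1-ε))/(x+1))) / Real.log x by
    field_simp]
  exact (div_le_div_iff_of_pos_right hlx).2 hH

lemma coreUB (ε : ℝ) (hε0 : 0 < ε) (hε1 : ε < 1) (n : ℕ) (hn2 : 2 ≤ n)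
    (hx1 : 1 ≤ (n:ℝ) - (n:ℝ)^(1-ε)) :
    (-(∑ j ∈ Finset.Icc (⌊(n : ℝ) - (n : ℝ) ^ (1 - ε)⌋₊ + 1) n,
          (((1 : ℝ) / (j : ℝ) - 1 / ((j : ℝ) + 1)) /
              (1 / ((⌊(n : ℝ) - (n : ℝ) ^ (1 - ε)⌋₊ : ℝ) + 1) - 1 / ((n : ℝ) + 1))) *
            Real.log
              (((1 : ℝ) / (j : ℝ) - 1 / ((j : ℝ) + 1)) /
                (1 / ((⌊(n : ℝ) - (n : ℝ) ^ (1 - ε)⌋₊ : ℝ) + 1) - 1 / ((n : ℝ) + 1))))) /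
        Real.log n ≤ 4 := by
  have hx2 : (2:ℝ) ≤ (n:ℝ) := by exact_mod_cast hn2
  set x := (n:ℝ) with hxdef
  have hx0 : 0 < x := by linarith
  have hrp : 0 < x^(1-ε) := Real.rpow_pos_of_pos hx0 _
  set m := ⌊x - x^(1-ε)⌋₊ with hmdef
  have hrr : (0:ℝ) ≤ x - x^(1-ε) := by linarith
  have hmle : (m:ℝ) ≤ x - x^(1-ε) := Nat.floor_le hrr
  have hm1 : 1 ≤ m := Nat.le_floor (by exact_mod_cast hx1)
  have hmn : m < n := by
    apply (Nat.floor_lt hrr).2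
    linarith
  have hkn : m + 1 ≤ n := hmn
  set K : ℝ := (m:ℝ) + 1 with hKdef
  have hK2 : (2:ℝ) ≤ K := by
    have : (1:ℝ) ≤ (m:ℝ) := by exact_mod_cast hm1
    rw [hKdef]; linarith
  have hKx : K ≤ x := by
    have : ((m:ℕ):ℝ) + 1 ≤ (n:ℝ) := by exact_mod_cast hkn
    rw [hKdef]; exact this
  have hK0 : (0:ℝ) < K := by linarith
  set S : ℝ := 1 / K - 1 / (x + 1) with hSdef
  have hS : 0 < S := by
    have h1 : 1/(x+1) < 1/K := one_div_lt_one_div_of_lt (by linarith) (by linarith)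
    rw [hSdef]; linarith
  have hsum : ∑ j ∈ Finset.Icc (m+1) n, ((1:ℝ)/(j:ℝ) - 1/((j:ℝ)+1)) = S := by
    rw [tele (m+1) n hkn, hSdef, hKdef]
    push_cast
    ring
  have hwsum : ∑ j ∈ Finset.Icc (m+1) n,
      (((1:ℝ)/(j:ℝ) - 1/((j:ℝ)+1)) / S) = 1 := by
    rw [← Finset.sum_div, hsum, div_self hS.ne']
  have hdn : (1:ℝ)/x - 1/(x+1) = 1/(x*(x+1)) := by field_simp; ring
  have hdnpos : 0 < (1:ℝ)/x - 1/(x+1) := by rw [hdn]; positivity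
  have hwnpos : 0 < ((1:ℝ)/x - 1/(x+1)) / S := div_pos hdnpos hS
  have key : ∀ j ∈ Finset.Icc (m+1) n,
      (((1:ℝ)/(j:ℝ) - 1/((j:ℝ)+1)) / S) * Real.log (((1:ℝ)/x - 1/(x+1)) / S)
      ≤ (((1:ℝ)/(j:ℝ) - 1/((j:ℝ)+1)) / S) * Real.log (((1:ℝ)/(j:ℝ) - 1/((j:ℝ)+1)) / S) := by
    intro j hj
    simp only [Finset.mem_Icc] at hj
    have hjK : K ≤ (j:ℝ) := by
      have : ((m:ℕ):ℝ) + 1 ≤ (j:ℝ) := by exact_mod_cast hj.1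
      rw [hKdef]; exact this
    have hjx : (j:ℝ) ≤ x := by rw [hxdef]; exact_mod_cast hj.2
    have hj0 : (0:ℝ) < (j:ℝ) := by linarith
    have hdj : (1:ℝ)/(j:ℝ) - 1/((j:ℝ)+1) = 1/((j:ℝ)*((j:ℝ)+1)) := by field_simp; ring
    have hdjpos : 0 < (1:ℝ)/(j:ℝ) - 1/((j:ℝ)+1) := by rw [hdj]; positivity
    have hle : (1:ℝ)/x - 1/(x+1) ≤ 1/(j:ℝ) - 1/((j:ℝ)+1) := by
      rw [hdj, hdn]
      apply one_div_le_one_div_of_le (by positivity)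
      apply mul_le_mul hjx (by linarith) (by linarith) (by linarith)
    have hwpos : 0 < ((1:ℝ)/(j:ℝ) - 1/((j:ℝ)+1)) / S := div_pos hdjpos hS
    refine mul_le_mul_of_nonneg_left ?_ hwpos.le
    exact Real.log_le_log hwnpos ((div_le_div_iff_of_pos_right hS).2 hle)
  have hsumge : Real.log (((1:ℝ)/x - 1/(x+1)) / S) ≤
      (∑ j ∈ Finset.Icc (m+1) n,
      (((1:ℝ)/(j:ℝ) - 1/((j:ℝ)+1)) / S) * Real.log (((1:ℝ)/(j:ℝ) - 1/((j:ℝ)+1)) / S)) := by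
    calc Real.log (((1:ℝ)/x - 1/(x+1)) / S)
        = (∑ j ∈ Finset.Icc (m+1) n, (((1:ℝ)/(j:ℝ) - 1/((j:ℝ)+1)) / S)) *
            Real.log (((1:ℝ)/x - 1/(x+1)) / S) := by rw [hwsum, one_mul]
      _ = ∑ j ∈ Finset.Icc (m+1) n,
            (((1:ℝ)/(j:ℝ) - 1/((j:ℝ)+1)) / S) * Real.log (((1:ℝ)/x - 1/(x+1)) / S) := by
            rw [← Finset.sum_mul]
      _ ≤ _ := Finset.sum_le_sum key
  have hinv : ((((1:ℝ)/x - 1/(x+1)) / S))⁻¹ = S * (x*(x+1)) := by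
    have hx1' : x + 1 ≠ 0 := by positivity
    rw [hdn, inv_div]
    field_simp
  have hS1 : S ≤ 1 := by
    have h1 : 1/K ≤ 1 := by rw [div_le_one hK0]; linarith
    have h2 : 0 < 1/(x+1) := by positivity
    rw [hSdef]; linarith
  have hub : S * (x*(x+1)) ≤ x^(4:ℕ) := by
    have h1 : S * (x*(x+1)) ≤ 1 * (x*(x+1)) := mul_le_mul_of_nonneg_right hS1 (by positivity)
    have h2 : x*(x+1) ≤ x^(4:ℕ) := by nlinarith [hx2, sq_nonneg (x^2 - x), sq_nonneg x]
    linarith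
  have hlog4 : Real.log ((((1:ℝ)/x - 1/(x+1)) / S)⁻¹) ≤ 4 * Real.log x := by
    rw [hinv]
    calc Real.log (S * (x*(x+1))) ≤ Real.log (x^(4:ℕ)) :=
          Real.log_le_log (by positivity) hub
      _ = 4 * Real.log x := by rw [Real.log_pow]; norm_num
  have hlx : 0 < Real.log x := Real.log_pos (by linarith)
  rw [div_le_iff₀ hlx]
  have : -(∑ j ∈ Finset.Icc (m+1) n,
      (((1:ℝ)/(j:ℝ) - 1/((j:ℝ)+1)) / S) * Real.log (((1:ℝ)/(j:ℝ) - 1/((j:ℝ)+1)) / S))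
      ≤ Real.log ((((1:ℝ)/x - 1/(x+1)) / S)⁻¹) := by
    rw [Real.log_inv]
    linarith
  linarith

theorem stmt2 (ε : ℝ) (hε : ε ∈ Set.Ioo (0:ℝ) 1) :
    (1 - ε) ≤ Filter.atTop.liminf (fun n : ℕ =>
      (-(∑ j ∈ Finset.Icc (⌊(n : ℝ) - (n : ℝ) ^ (1 - ε)⌋₊ + 1) n,
          (((1 : ℝ) / (j : ℝ) - 1 / ((j : ℝ) + 1)) /
              (1 / ((⌊(n : ℝ) - (n : ℝ) ^ (1 - ε)⌋₊ : ℝ) + 1) - 1 / ((n : ℝ) + 1))) *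
            Real.log
              (((1 : ℝ) / (j : ℝ) - 1 / ((j : ℝ) + 1)) /
                (1 / ((⌊(n : ℝ) - (n : ℝ) ^ (1 - ε)⌋₊ : ℝ) + 1) - 1 / ((n : ℝ) + 1))))) /
        Real.log n) := by
  obtain ⟨hε0, hε1⟩ := hε
  set v : ℕ → ℝ := fun n : ℕ =>
      (-(∑ j ∈ Finset.Icc (⌊(n : ℝ) - (n : ℝ) ^ (1 - ε)⌋₊ + 1) n,
          (((1 : ℝ) / (j : ℝ) - 1 / ((j : ℝ) + 1)) /
              (1 / ((⌊(n : ℝ) - (n : ℝ) ^ (1 - ε)⌋₊ : ℝ) + 1) - 1 / ((n : ℝ) + 1))) *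
            Real.log
              (((1 : ℝ) / (j : ℝ) - 1 / ((j : ℝ) + 1)) /
                (1 / ((⌊(n : ℝ) - (n : ℝ) ^ (1 - ε)⌋₊ : ℝ) + 1) - 1 / ((n : ℝ) + 1))))) /
        Real.log n with hvdef
  set b : ℕ → ℝ := fun n : ℕ =>
      (1 - ε) + Real.log (((n:ℝ) - (n:ℝ)^(1-ε)) / ((n:ℝ)+1)) / Real.log n with hbdef
  have hneg : Tendsto (fun n:ℕ => ((n:ℝ))^(-ε)) atTop (nhds 0) :=
    (tendsto_rpow_neg_atTop hε0).comp tendsto_natCast_atTop_atTop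
  have hsplit : ∀ n : ℕ, 1 ≤ n → (n:ℝ)^(1-ε) = (n:ℝ) * (n:ℝ)^(-ε) := by
    intro n hn
    have hx0 : (0:ℝ) < n := by exact_mod_cast hn
    rw [show (1:ℝ) - ε = 1 + (-ε) by ring, Real.rpow_add hx0, Real.rpow_one]
  have hratio : Tendsto (fun n:ℕ => ((n:ℝ) - (n:ℝ)^(1-ε)) / ((n:ℝ)+1)) atTop (nhds 1) := by
    have h2 : Tendsto (fun n:ℕ => (1 - ((n:ℝ))^(-ε)) * ((n:ℝ)/((n:ℝ)+1))) atTop (nhds 1) := by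
      have := ((tendsto_const_nhds : Tendsto (fun _ : ℕ => (1:ℝ)) atTop (nhds 1)).sub hneg).mul (tendsto_natCast_div_add_atTop (1:ℝ))
      simpa using this
    apply h2.congr'
    filter_upwards [eventually_ge_atTop 1] with n hn
    have hx0 : (0:ℝ) < n := by exact_mod_cast hn
    rw [hsplit n hn]
    field_simp
  have hlogr : Tendsto (fun n:ℕ => Real.log (((n:ℝ) - (n:ℝ)^(1-ε)) / ((n:ℝ)+1)))
      atTop (nhds 0) := by
    simpa using hratio.log one_ne_zero
  have hlogtop : Tendsto (fun n:ℕ => Real.log (n:ℝ)) atTop atTop :=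
    Real.tendsto_log_atTop.comp tendsto_natCast_atTop_atTop
  have hb : Tendsto b atTop (nhds (1-ε)) := by
    have := (tendsto_const_nhds : Tendsto (fun _:ℕ => (1-ε)) atTop (nhds (1-ε))).add (hlogr.div_atTop hlogtop)
    simpa [hbdef] using this
  have hev : ∀ᶠ n in atTop, b n ≤ v n := by
    have hhalf : ∀ᶠ n:ℕ in atTop, ((n:ℝ))^(-ε) ≤ 1/2 :=
      hneg.eventually (eventually_le_nhds (by norm_num))
    filter_upwards [hhalf, eventually_ge_atTop 2] with n hh hn2
    have hx2 : (2:ℝ) ≤ n := by exact_mod_cast hn2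
    have h1 : 1 ≤ (n:ℝ) - (n:ℝ)^(1-ε) := by
      rw [hsplit n (by omega)]
      nlinarith [Real.rpow_pos_of_pos (show (0:ℝ) < n by linarith) (-ε)]
    exact core ε hε0 hε1 n hn2 h1
  have hliminf : Filter.atTop.liminf b = 1 - ε := hb.liminf_eq
  rw [← hliminf]
  have hcb : Filter.IsCoboundedUnder (· ≥ ·) Filter.atTop v := by
    apply Filter.isCoboundedUnder_ge_of_eventually_le Filter.atTop (x := (4:ℝ))
    have hhalf : ∀ᶠ n:ℕ in atTop, ((n:ℝ))^(-ε) ≤ 1/2 :=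
      hneg.eventually (eventually_le_nhds (by norm_num))
    filter_upwards [hhalf, eventually_ge_atTop 2] with n hh hn2
    have hx2 : (2:ℝ) ≤ n := by exact_mod_cast hn2
    have h1 : 1 ≤ (n:ℝ) - (n:ℝ)^(1-ε) := by
      rw [hsplit n (by omega)]
      nlinarith [Real.rpow_pos_of_pos (show (0:ℝ) < n by linarith) (-ε)]
    exact coreUB ε hε0 hε1 n hn2 h1
  exact Filter.liminf_le_liminf hev hb.isBoundedUnder_ge hcb
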